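/- Let 1<p,q<∞ with 1/p+1/q=1, let μ be a finite Borel measure on ℝ^d, let ν be a (p,q)-Bessel measure for μ with bound B, and let ρ be a Borel probability measure on ℝ^d. Then the convolution ν ∗ ρ is a (p,q)-Bessel measure for μ with the same bound B. The analogous statement with both bounds holds for (p,q)-frame measures. -/

import Mathlib

open MeasureTheory Complex Filter
open scoped ENNReal NNReal Real RealInnerProductSpace

/-- The Fourier transform of the measure `f dμ` at `t`:
`(f dμ)^(t) = ∫ f(x) e^{-2πi t·x} dμ(x)`. -/
noncomputable def FT {d : ℕ} (μ : Measure (EuclideanSpace ℝ (Fin d)))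
    (f : EuclideanSpace ℝ (Fin d) → ℂ) (t : EuclideanSpace ℝ (Fin d)) : ℂ :=
  ∫ x, f x * Complex.exp (-(2 * Real.pi * (⟪t, x⟫ : ℝ) : ℝ) * Complex.I) ∂μ
variable {d : ℕ}

/-- Convolution of two Borel measures on `ℝ^d`:
`(ν ∗ ρ)(E) = ∫∫ χ_E(x+y) dν(x) dρ(y)`. -/
noncomputable def convM (ν ρ : Measure (EuclideanSpace ℝ (Fin d))) :
    Measure (EuclideanSpace ℝ (Fin d)) :=
  Measure.map (fun z : EuclideanSpace ℝ (Fin d) × EuclideanSpace ℝ (Fin d) => z.1 + z.2)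
    (ν.prod ρ)

/-- `ν` is a `(p,q)`-Bessel measure for `μ` with bound `B`. -/
def BesselM (μ ν : Measure (EuclideanSpace ℝ (Fin d))) (p q B : ℝ) : Prop :=
  ∀ f : EuclideanSpace ℝ (Fin d) → ℂ, MemLp f (ENNReal.ofReal p) μ →
    ∫⁻ t, (‖FT μ f t‖₊ : ℝ≥0∞) ^ q ∂ν ≤
      ENNReal.ofReal B * (eLpNorm f (ENNReal.ofReal p) μ) ^ q

/-- `ν` is a `(p,q)`-frame measure for `μ` with bounds `A, B`. -/
def FrameM (μ ν : Measure (EuclideanSpace ℝ (Fin d))) (p q A B : ℝ) : Prop :=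
  BesselM μ ν p q B ∧
  ∀ f : EuclideanSpace ℝ (Fin d) → ℂ, MemLp f (ENNReal.ofReal p) μ →
    ENNReal.ofReal A * (eLpNorm f (ENNReal.ofReal p) μ) ^ q ≤
      ∫⁻ t, (‖FT μ f t‖₊ : ℝ≥0∞) ^ q ∂ν

namespace Stmt17Aux

noncomputable def ch (y z : EuclideanSpace ℝ (Fin d)) : ℂ :=
  Complex.exp (-(2 * Real.pi * (⟪y, z⟫ : ℝ) : ℝ) * Complex.I)

lemma cont_exp_inner :
    Continuous fun p : EuclideanSpace ℝ (Fin d) × EuclideanSpace ℝ (Fin d) =>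
      Complex.exp (-(2 * Real.pi * (⟪p.1, p.2⟫ : ℝ) : ℝ) * Complex.I) := by
  have h1 : Continuous fun p : EuclideanSpace ℝ (Fin d) × EuclideanSpace ℝ (Fin d) =>
      (2 * Real.pi * (⟪p.1, p.2⟫ : ℝ)) := continuous_const.mul continuous_inner
  exact Complex.continuous_exp.comp (((Complex.continuous_ofReal.comp h1).neg).mul continuous_const)

lemma continuous_ch (y : EuclideanSpace ℝ (Fin d)) : Continuous (ch y) := by
  unfold ch
  have h1 : Continuous fun z : EuclideanSpace ℝ (Fin d) => (2 * Real.pi * (⟪y, z⟫ : ℝ)) :=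
    continuous_const.mul (Continuous.inner continuous_const continuous_id)
  exact Complex.continuous_exp.comp (((Complex.continuous_ofReal.comp h1).neg).mul continuous_const)

lemma norm_ch (y z : EuclideanSpace ℝ (Fin d)) : ‖ch y z‖ = 1 := by
  simpa [ch] using Complex.norm_exp_ofReal_mul_I (-(2 * Real.pi * (⟪y, z⟫ : ℝ)))

lemma ft_shift (μ : Measure (EuclideanSpace ℝ (Fin d))) (f : EuclideanSpace ℝ (Fin d) → ℂ)
    (x y : EuclideanSpace ℝ (Fin d)) :
    FT μ f (x + y) = FT μ (fun z => f z * ch y z) x := by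
  refine integral_congr_ae (Eventually.of_forall fun z => ?_)
  simp only [ch, inner_add_left]
  rw [mul_assoc (f z), ← Complex.exp_add]
  congr 1
  push_cast
  ring_nf

lemma eLpNorm_mul_ch (μ : Measure (EuclideanSpace ℝ (Fin d))) (P : ℝ≥0∞)
    (f : EuclideanSpace ℝ (Fin d) → ℂ) (y : EuclideanSpace ℝ (Fin d)) :
    eLpNorm (fun z => f z * ch y z) P μ = eLpNorm f P μ :=
  eLpNorm_congr_norm_ae (Eventually.of_forall fun z => by rw [norm_mul, norm_ch, mul_one])

lemma memLp_mul_ch {μ : Measure (EuclideanSpace ℝ (Fin d))} {P : ℝ≥0∞}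
    {f : EuclideanSpace ℝ (Fin d) → ℂ} (hf : MemLp f P μ) (y : EuclideanSpace ℝ (Fin d)) :
    MemLp (fun z => f z * ch y z) P μ :=
  ⟨hf.1.mul (continuous_ch y).aestronglyMeasurable, by rw [eLpNorm_mul_ch]; exact hf.2⟩

lemma ftSM {μ : Measure (EuclideanSpace ℝ (Fin d))} [SFinite μ]
    {f : EuclideanSpace ℝ (Fin d) → ℂ} (hf : AEStronglyMeasurable f μ) :
    StronglyMeasurable (FT μ f) := by
  have heq : FT μ f = FT μ (hf.mk f) :=
    funext fun t => integral_congr_ae (hf.ae_eq_mk.mono fun z hz => by simp only [hz])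
  rw [heq]
  have hsm : StronglyMeasurable (fun pz : EuclideanSpace ℝ (Fin d) × EuclideanSpace ℝ (Fin d) =>
      hf.mk f pz.2 * Complex.exp (-(2 * Real.pi * (⟪pz.1, pz.2⟫ : ℝ) : ℝ) * Complex.I)) :=
    (hf.stronglyMeasurable_mk.comp_measurable measurable_snd).mul
      cont_exp_inner.stronglyMeasurable
  exact hsm.integral_prod_right'

lemma meas_ft {μ : Measure (EuclideanSpace ℝ (Fin d))} [SFinite μ]
    {f : EuclideanSpace ℝ (Fin d) → ℂ} (hf : AEStronglyMeasurable f μ) (q : ℝ) :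
    Measurable fun t => (‖FT μ f t‖₊ : ℝ≥0∞) ^ q :=
  ((ftSM hf).measurable.nnnorm.coe_nnreal_ennreal).pow_const q

lemma conv_lintegral {μ ν ρ : Measure (EuclideanSpace ℝ (Fin d))} [SFinite μ] [SigmaFinite ν]
    [SFinite ρ] {f : EuclideanSpace ℝ (Fin d) → ℂ} (hf : AEStronglyMeasurable f μ) (q : ℝ) :
    ∫⁻ t, (‖FT μ f t‖₊ : ℝ≥0∞) ^ q
        ∂(Measure.map (fun z : EuclideanSpace ℝ (Fin d) × EuclideanSpace ℝ (Fin d) =>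
            z.1 + z.2) (ν.prod ρ))
      = ∫⁻ y, (∫⁻ x, (‖FT μ (fun z => f z * ch y z) x‖₊ : ℝ≥0∞) ^ q ∂ν) ∂ρ := by
  have hadd : Measurable fun z : EuclideanSpace ℝ (Fin d) × EuclideanSpace ℝ (Fin d) =>
      z.1 + z.2 := (continuous_fst.add continuous_snd).measurable
  rw [lintegral_map (meas_ft hf q) hadd,
    lintegral_prod_symm
      (fun z : EuclideanSpace ℝ (Fin d) × EuclideanSpace ℝ (Fin d) =>
        (‖FT μ f (z.1 + z.2)‖₊ : ℝ≥0∞) ^ q)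
      (((meas_ft hf q).comp hadd).aemeasurable)]
  refine lintegral_congr fun y => lintegral_congr fun x => ?_
  rw [ft_shift]

lemma nu_locfin {μ ν : Measure (EuclideanSpace ℝ (Fin d))} [IsFiniteMeasure μ]
    {p q B : ℝ} (hq : 0 < q) (hμ : μ ≠ 0)
    (hν : ∀ f : EuclideanSpace ℝ (Fin d) → ℂ, MemLp f (ENNReal.ofReal p) μ →
      ∫⁻ t, (‖FT μ f t‖₊ : ℝ≥0∞) ^ q ∂ν ≤
        ENNReal.ofReal B * (eLpNorm f (ENNReal.ofReal p) μ) ^ q) :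
    IsLocallyFiniteMeasure ν := by
  set one : EuclideanSpace ℝ (Fin d) → ℂ := fun _ => 1 with hone
  have h1 : MemLp one (ENNReal.ofReal p) μ := memLp_const 1
  -- continuity of the Fourier transform of μ
  have hcont : Continuous (FT μ one) := by
    unfold FT
    refine continuous_of_dominated (bound := fun _ => (1 : ℝ)) (fun t => ?_) (fun t => ?_)
      (integrable_const 1) ?_
    · exact (aestronglyMeasurable_const.mul ((continuous_ch t).aestronglyMeasurable))
    · filter_upwards with x
      simp only [hone, one_mul]
      exact le_of_eq (norm_ch t x)
    · filter_upwards with x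
      have h1 : Continuous fun t : EuclideanSpace ℝ (Fin d) => (2 * Real.pi * (⟪t, x⟫ : ℝ)) :=
        continuous_const.mul (Continuous.inner continuous_id continuous_const)
      exact continuous_const.mul (Complex.continuous_exp.comp
        (((Complex.continuous_ofReal.comp h1).neg).mul continuous_const))
  have h0 : FT μ one 0 = ((μ Set.univ).toReal : ℂ) := by
    unfold FT
    simp [hone, inner_zero_left]
    rfl
  set c : ℝ := (μ Set.univ).toReal / 2 with hc
  have hcpos : 0 < c := by
    have : 0 < (μ Set.univ).toReal :=
      ENNReal.toReal_pos (by simpa [Measure.measure_univ_eq_zero] using hμ) (measure_ne_top μ _)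
    positivity
  have hev : ∀ᶠ t in nhds (0 : EuclideanSpace ℝ (Fin d)), c < ‖FT μ one t‖ := by
    have hT : 0 < (μ Set.univ).toReal :=
      ENNReal.toReal_pos (by simpa [Measure.measure_univ_eq_zero] using hμ) (measure_ne_top μ _)
    have hlt : c < ‖FT μ one 0‖ := by
      rw [h0, Complex.norm_real, Real.norm_eq_abs, _root_.abs_of_nonneg ENNReal.toReal_nonneg, hc]
      linarith
    exact (hcont.norm.tendsto 0).eventually (eventually_gt_nhds hlt)
  obtain ⟨r, hr, hball⟩ := Metric.eventually_nhds_iff_ball.mp hev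
  -- the Bessel bound is uniform in the modulation
  set C : ℝ≥0∞ := ENNReal.ofReal B * (eLpNorm one (ENNReal.ofReal p) μ) ^ q with hC
  have hCtop : C ≠ ∞ := by
    refine ENNReal.mul_ne_top ENNReal.ofReal_ne_top ?_
    exact (ENNReal.rpow_lt_top_of_nonneg hq.le h1.2.ne).ne
  set cq : ℝ≥0∞ := (ENNReal.ofReal c) ^ q with hcq
  have hcq0 : cq ≠ 0 := by
    simp [hcq, ENNReal.rpow_eq_zero_iff, ENNReal.ofReal_eq_zero, not_or, hcpos, hcpos.not_ge]
  have hcqtop : cq ≠ ∞ :=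
    ENNReal.rpow_ne_top_of_nonneg hq.le ENNReal.ofReal_ne_top
  have key : ∀ s : EuclideanSpace ℝ (Fin d), ν (Metric.ball s r) ≤ C / cq := by
    intro s
    have hg := hν (fun z => one z * ch (-s) z) (memLp_mul_ch h1 (-s))
    rw [eLpNorm_mul_ch] at hg
    have hmono : cq * ν (Metric.ball s r) ≤
        ∫⁻ t, (‖FT μ (fun z => one z * ch (-s) z) t‖₊ : ℝ≥0∞) ^ q ∂ν := by
      have hsub : ∫⁻ t in Metric.ball s r, cq ∂ν ≤
          ∫⁻ t in Metric.ball s r,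
            (‖FT μ (fun z => one z * ch (-s) z) t‖₊ : ℝ≥0∞) ^ q ∂ν := by
        refine setLIntegral_mono (meas_ft (memLp_mul_ch h1 (-s)).1 q) fun t ht => ?_
        have hts : FT μ (fun z => one z * ch (-s) z) t = FT μ one (t + -s) := (ft_shift μ one t (-s)).symm
        have hmem : t + -s ∈ Metric.ball (0 : EuclideanSpace ℝ (Fin d)) r := by
          have := Metric.mem_ball.mp ht
          rw [dist_eq_norm] at this
          simpa [Metric.mem_ball, dist_eq_norm, sub_eq_add_neg] using this
        have hnorm : c ≤ ‖FT μ (fun z => one z * ch (-s) z) t‖ := by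
          rw [hts]; exact (hball _ hmem).le
        calc cq = (ENNReal.ofReal c) ^ q := rfl
          _ ≤ ((‖FT μ (fun z => one z * ch (-s) z) t‖₊ : ℝ≥0∞)) ^ q := by
            refine ENNReal.rpow_le_rpow ?_ hq.le
            rw [← enorm_eq_nnnorm, ← ofReal_norm]
            exact ENNReal.ofReal_le_ofReal hnorm
      calc cq * ν (Metric.ball s r) = ∫⁻ _ in Metric.ball s r, cq ∂ν := by
            rw [setLIntegral_const, mul_comm]
        _ ≤ _ := hsub.trans (setLIntegral_le_lintegral _ _)
    have := hmono.trans hg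
    rw [mul_comm] at this
    exact ENNReal.le_div_iff_mul_le (Or.inl hcq0) (Or.inl hcqtop) |>.mpr this
  refine ⟨fun x => ⟨Metric.ball x r, Metric.ball_mem_nhds x hr, ?_⟩⟩
  exact lt_of_le_of_lt (key x) (ENNReal.div_lt_top hCtop hcq0)

end Stmt17Aux

/-- If `ν` is a `(p,q)`-Bessel (resp. frame) measure for a finite measure `μ` and `ρ` is a
Borel probability measure, then `ν ∗ ρ` is a `(p,q)`-Bessel (resp. frame) measure for `μ`
with the same bound(s). -/
theorem stmt17 (p q : ℝ) (hp : 1 < p) (hq : 1 < q) (hpq : 1 / p + 1 / q = 1)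
    (μ ν ρ : Measure (EuclideanSpace ℝ (Fin d))) [IsFiniteMeasure μ] [IsProbabilityMeasure ρ]
    (A B : ℝ) (hA : 0 < A) (hB : 0 < B) :
    (BesselM μ ν p q B → BesselM μ (convM ν ρ) p q B) ∧
    (FrameM μ ν p q A B → FrameM μ (convM ν ρ) p q A B) := by
  have hq0 : 0 < q := lt_trans one_pos hq
  have bess : BesselM μ ν p q B → BesselM μ (convM ν ρ) p q B := by
    intro hν
    by_cases hμ : μ = 0
    · intro f hf
      subst hμ
      have h0 : ∀ t, FT (0 : Measure (EuclideanSpace ℝ (Fin d))) f t = 0 := fun t =>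
        integral_zero_measure _
      simp [h0, ENNReal.zero_rpow_of_pos hq0]
    · haveI : IsLocallyFiniteMeasure ν := Stmt17Aux.nu_locfin hq0 hμ hν
      intro f hf
      rw [convM, Stmt17Aux.conv_lintegral hf.1 q]
      calc ∫⁻ y, (∫⁻ x, (‖FT μ (fun z => f z * Stmt17Aux.ch y z) x‖₊ : ℝ≥0∞) ^ q ∂ν) ∂ρ
          ≤ ∫⁻ _, ENNReal.ofReal B * (eLpNorm f (ENNReal.ofReal p) μ) ^ q ∂ρ := by
            refine lintegral_mono fun y => ?_
            have h := hν _ (Stmt17Aux.memLp_mul_ch hf y)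
            rwa [Stmt17Aux.eLpNorm_mul_ch] at h
        _ = ENNReal.ofReal B * (eLpNorm f (ENNReal.ofReal p) μ) ^ q := by
            rw [lintegral_const, measure_univ, mul_one]
  refine ⟨bess, fun hF => ⟨bess hF.1, ?_⟩⟩
  intro f hf
  by_cases hμ : μ = 0
  · subst hμ
    simp [eLpNorm_measure_zero, ENNReal.zero_rpow_of_pos hq0]
  · haveI : IsLocallyFiniteMeasure ν := Stmt17Aux.nu_locfin hq0 hμ hF.1
    rw [convM, Stmt17Aux.conv_lintegral hf.1 q]
    have heq : ENNReal.ofReal A * (eLpNorm f (ENNReal.ofReal p) μ) ^ q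
        = ∫⁻ _, ENNReal.ofReal A * (eLpNorm f (ENNReal.ofReal p) μ) ^ q ∂ρ := by
      rw [lintegral_const, measure_univ, mul_one]
    rw [heq]
    refine lintegral_mono fun y => ?_
    have h := hF.2 _ (Stmt17Aux.memLp_mul_ch hf y)
    rwa [Stmt17Aux.eLpNorm_mul_ch] at h
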